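/- Let f : ℝ^d → ℝ be convex and L-smooth (differentiable with L-Lipschitz gradient, L > 0), bounded below with f* := inf f. Let w_0 ∈ ℝ^d and define gradient-descent iterates w_{τ+1} = w_τ − η ∇f(w_τ) with step size 0 < η ≤ 1/(2L). Then for every w* ∈ ℝ^d and every positive integer E, with Δ := f(w*) − f*, it holds that ‖w_E − w*‖² ≤ ‖w_0 − w*‖² − (η/(2L)) Σ_{τ=0}^{E−1} ‖∇f(w_τ)‖² + 2 η E Δ. -/

import Mathlib

open scoped RealInnerProductSpace

-- derivative of f along a line
lemma lineDeriv_aux {d : ℕ} (f : EuclideanSpace ℝ (Fin d) → ℝ)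
    (hdiff : Differentiable ℝ f) (x v : EuclideanSpace ℝ (Fin d)) (t : ℝ) :
    HasDerivAt (fun s : ℝ => f (x + s • v)) ⟪gradient f (x + t • v), v⟫ t := by
  have h1 : HasDerivAt (fun s : ℝ => x + s • v) v t := by
    simpa using ((hasDerivAt_id t).smul_const v).const_add x
  have h2 := (hdiff (x + t • v)).hasGradientAt
  rw [hasGradientAt_iff_hasFDerivAt] at h2
  simpa [InnerProductSpace.toDual_apply_apply, Function.comp_def] using h2.comp_hasDerivAt t h1

-- descent lemma: L-smoothness upper quadratic bound
lemma descent_aux {d : ℕ} (f : EuclideanSpace ℝ (Fin d) → ℝ) (L : ℝ) (hL : 0 < L)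
    (hdiff : Differentiable ℝ f)
    (hlip : ∀ x y, ‖gradient f x - gradient f y‖ ≤ L * ‖x - y‖)
    (x y : EuclideanSpace ℝ (Fin d)) :
    f y ≤ f x + ⟪gradient f x, y - x⟫ + L / 2 * ‖y - x‖ ^ 2 := by
  set v := y - x with hv
  have hgc : Continuous (gradient f) := by
    have : LipschitzWith (Real.toNNReal L) (gradient f) := by
      apply LipschitzWith.of_dist_le_mul
      intro a b
      rw [dist_eq_norm, dist_eq_norm, Real.coe_toNNReal L hL.le]
      exact hlip a b
    exact this.continuous
  have hcont : Continuous (fun t : ℝ => ⟪gradient f (x + t • v), v⟫) := by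
    apply Continuous.inner
    · exact hgc.comp (by continuity)
    · exact continuous_const
  have hint : f (x + (1:ℝ) • v) - f (x + (0:ℝ) • v)
      = ∫ t in (0:ℝ)..1, ⟪gradient f (x + t • v), v⟫ := by
    exact (intervalIntegral.integral_eq_sub_of_hasDerivAt
      (f := fun s : ℝ => f (x + s • v)) (fun t _ => lineDeriv_aux f hdiff x v t)
      (hcont.intervalIntegrable 0 1)).symm
  have hmono : ∫ t in (0:ℝ)..1, ⟪gradient f (x + t • v), v⟫
      ≤ ∫ t in (0:ℝ)..1, (⟪gradient f (x + (0:ℝ) • v), v⟫ + L * ‖v‖ ^ 2 * t) := by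
    apply intervalIntegral.integral_mono_on zero_le_one (hcont.intervalIntegrable 0 1)
      ((by fun_prop : Continuous fun t : ℝ => ⟪gradient f (x + (0:ℝ) • v), v⟫ + L * ‖v‖ ^ 2 * t).intervalIntegrable 0 1)
    intro t ht
    obtain ⟨ht0, ht1⟩ := ht
    have h1 : ⟪gradient f (x + t • v), v⟫ - ⟪gradient f (x + (0:ℝ) • v), v⟫
        = ⟪gradient f (x + t • v) - gradient f (x + (0:ℝ) • v), v⟫ := by
      rw [inner_sub_left]
    have h2 : ⟪gradient f (x + t • v) - gradient f (x + (0:ℝ) • v), v⟫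
        ≤ ‖gradient f (x + t • v) - gradient f (x + (0:ℝ) • v)‖ * ‖v‖ :=
      real_inner_le_norm _ _
    have h3 : ‖gradient f (x + t • v) - gradient f (x + (0:ℝ) • v)‖
        ≤ L * (t * ‖v‖) := by
      have := hlip (x + t • v) (x + (0:ℝ) • v)
      simpa [norm_smul, abs_of_nonneg ht0] using this
    have hvnn : (0:ℝ) ≤ ‖v‖ := norm_nonneg _
    nlinarith [hL.le]
  have hintval : ∫ t in (0:ℝ)..1, (⟪gradient f (x + (0:ℝ) • v), v⟫ + L * ‖v‖ ^ 2 * t)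
      = ⟪gradient f (x + (0:ℝ) • v), v⟫ + L * ‖v‖ ^ 2 / 2 := by
    rw [intervalIntegral.integral_add (intervalIntegrable_const)
      ((by fun_prop : Continuous fun t : ℝ => L * ‖v‖ ^ 2 * t).intervalIntegrable 0 1)]
    rw [intervalIntegral.integral_const_mul, integral_id]
    simp
    ring
  have hx0 : x + (0:ℝ) • v = x := by simp
  have hx1 : x + (1:ℝ) • v = y := by simp [hv]
  rw [hx0, hx1] at hint
  rw [hx0] at hmono hintval
  nlinarith [hint, hmono, hintval]

-- first-order condition for convexity
lemma firstOrder_aux {d : ℕ} (f : EuclideanSpace ℝ (Fin d) → ℝ)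
    (hconv : ConvexOn ℝ Set.univ f) (hdiff : Differentiable ℝ f)
    (x y : EuclideanSpace ℝ (Fin d)) :
    f x + ⟪gradient f x, y - x⟫ ≤ f y := by
  have hg : ConvexOn ℝ Set.univ (fun t : ℝ => f (x + t • (y - x))) := by
    have h := hconv.comp_affineMap (AffineMap.lineMap x y)
    have he : (fun t : ℝ => f (x + t • (y - x))) = f ∘ (AffineMap.lineMap x y) := by
      funext t
      simp [AffineMap.lineMap_apply, add_comm]
    rw [he]
    simpa using h
  have hd := lineDeriv_aux f hdiff x (y - x) 0
  have hslope := hg.le_slope_of_hasDerivAt (Set.mem_univ (0:ℝ)) (Set.mem_univ (1:ℝ))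
    one_pos hd
  have : slope (fun t : ℝ => f (x + t • (y - x))) 0 1 = f y - f x := by
    simp [slope_def_field]
  rw [this] at hslope
  simp only [zero_smul, add_zero] at hslope
  linarith

-- lower bound via gradient norm
lemma gradSq_aux {d : ℕ} (f : EuclideanSpace ℝ (Fin d) → ℝ) (L : ℝ) (hL : 0 < L)
    (hdiff : Differentiable ℝ f)
    (hlip : ∀ x y, ‖gradient f x - gradient f y‖ ≤ L * ‖x - y‖)
    (fstar : ℝ) (hfstar : IsGLB (Set.range f) fstar)
    (x : EuclideanSpace ℝ (Fin d)) :
    ‖gradient f x‖ ^ 2 ≤ 2 * L * (f x - fstar) := by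
  set g := gradient f x with hg
  have hd := descent_aux f L hL hdiff hlip x (x - L⁻¹ • g)
  have h1 : x - L⁻¹ • g - x = -(L⁻¹ • g) := by abel
  rw [h1] at hd
  have h2 : ⟪g, -(L⁻¹ • g)⟫ = -(L⁻¹ * ‖g‖ ^ 2) := by
    rw [inner_neg_right, real_inner_smul_right, real_inner_self_eq_norm_sq]
  have h3 : ‖-(L⁻¹ • g)‖ ^ 2 = L⁻¹ ^ 2 * ‖g‖ ^ 2 := by
    rw [norm_neg, norm_smul, Real.norm_eq_abs, abs_inv, abs_of_pos hL]
    ring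
  rw [h2, h3] at hd
  have h4 : fstar ≤ f (x - L⁻¹ • g) := hfstar.1 ⟨_, rfl⟩
  have e1 : L / 2 * (L⁻¹ ^ 2 * ‖g‖ ^ 2) = L⁻¹ * ‖g‖ ^ 2 / 2 := by
    field_simp
  have h5 : L⁻¹ * ‖g‖ ^ 2 / 2 ≤ f x - fstar := by linarith
  have h6 := mul_le_mul_of_nonneg_left h5 (by positivity : (0:ℝ) ≤ 2 * L)
  have e2 : 2 * L * (L⁻¹ * ‖g‖ ^ 2 / 2) = ‖g‖ ^ 2 := by
    field_simp
  linarith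

/-- Lemma F.1: descent of distance to any point under gradient descent on a
convex, `L`-smooth function, up to heterogeneity slack `Δ = f w* - f*`. -/
theorem stmt_0 {d : ℕ} (f : EuclideanSpace ℝ (Fin d) → ℝ) (L : ℝ) (hL : 0 < L)
    (hconv : ConvexOn ℝ Set.univ f)
    (hdiff : Differentiable ℝ f)
    (hlip : ∀ x y, ‖gradient f x - gradient f y‖ ≤ L * ‖x - y‖)
    (fstar : ℝ) (hfstar : IsGLB (Set.range f) fstar)
    (η : ℝ) (hη0 : 0 < η) (hη : η ≤ 1 / (2 * L))
    (w : ℕ → EuclideanSpace ℝ (Fin d))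
    (hw : ∀ τ, w (τ + 1) = w τ - η • gradient f (w τ))
    (wstar : EuclideanSpace ℝ (Fin d)) (E : ℕ) (hE : 0 < E) :
    ‖w E - wstar‖ ^ 2 ≤
      ‖w 0 - wstar‖ ^ 2
        - (η / (2 * L)) * ∑ τ ∈ Finset.range E, ‖gradient f (w τ)‖ ^ 2
        + 2 * η * (E : ℝ) * (f wstar - fstar) := by
  have hηη : η ^ 2 ≤ η / (2 * L) := by
    rw [le_div_iff₀ (by positivity)]
    rw [le_div_iff₀ (by positivity)] at hη
    nlinarith [hη0.le]
  have step : ∀ τ : ℕ, ‖w (τ + 1) - wstar‖ ^ 2 ≤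
      ‖w τ - wstar‖ ^ 2 - (η / (2 * L)) * ‖gradient f (w τ)‖ ^ 2
        + 2 * η * (f wstar - fstar) := by
    intro τ
    set g := gradient f (w τ) with hgdef
    have expand : ‖w (τ + 1) - wstar‖ ^ 2
        = ‖w τ - wstar‖ ^ 2 - 2 * η * ⟪g, w τ - wstar⟫ + η ^ 2 * ‖g‖ ^ 2 := by
      rw [hw τ]
      have h1 : w τ - η • g - wstar = (w τ - wstar) - η • g := by abel
      rw [h1, norm_sub_sq_real, real_inner_smul_right, norm_smul, Real.norm_eq_abs,
        abs_of_pos hη0, real_inner_comm]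
      ring
    have hc : f (w τ) - f wstar ≤ ⟪g, w τ - wstar⟫ := by
      have h := firstOrder_aux f hconv hdiff (w τ) wstar
      have h2 : ⟪g, wstar - w τ⟫ = -⟪g, w τ - wstar⟫ := by
        rw [← inner_neg_right]
        congr 1
        abel
      rw [h2] at h
      linarith
    have hg2 : ‖g‖ ^ 2 ≤ 2 * L * (f (w τ) - fstar) :=
      gradSq_aux f L hL hdiff hlip fstar hfstar (w τ)
    have h3 : (η / (2 * L)) * ‖g‖ ^ 2 ≤ η * (f (w τ) - fstar) := by
      rw [div_mul_eq_mul_div, div_le_iff₀ (by positivity)]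
      nlinarith [hη0.le]
    have h4 : η ^ 2 * ‖g‖ ^ 2 ≤ (η / (2 * L)) * ‖g‖ ^ 2 :=
      mul_le_mul_of_nonneg_right hηη (sq_nonneg _)
    have h5 := mul_le_mul_of_nonneg_left hc (by positivity : (0:ℝ) ≤ 2 * η)
    linarith [expand, h3, h4, h5]
  have main : ∀ n : ℕ, ‖w n - wstar‖ ^ 2 ≤
      ‖w 0 - wstar‖ ^ 2
        - (η / (2 * L)) * ∑ τ ∈ Finset.range n, ‖gradient f (w τ)‖ ^ 2
        + 2 * η * (n : ℝ) * (f wstar - fstar) := by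
    intro n
    induction n with
    | zero => simp
    | succ n ih =>
      have hs := step n
      rw [Finset.sum_range_succ]
      push_cast
      nlinarith [hs, ih]
  exact main E
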